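/- Let R be a commutative ring and L, S, c_1 ∈ R. In R[[t]], the coefficient of t^2 in 4(3Lt + (12L^2 + LS − 5S^2)t^2 + (30L^2S − 35LS^2 + 10S^3)t^3) · ((1 + St)(1 + 6Lt − 4St)(1 + 4Lt − 2St))^{-1} · (1 + c_1 t) equals 4(3c_1L − 18L^2 + 16LS − 5S^2). -/

import Mathlib

open PowerSeries

theorem euler_su4_dim2 {R : Type*} [CommRing R] (L S c₁ : R) :
    (PowerSeries.coeff (R := R) 2)
      (4 * (3 * C L * X
            + (12 * C L ^ 2 + C L * C S - 5 * C S ^ 2) * X ^ 2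
            + (30 * C L ^ 2 * C S - 35 * C L * C S ^ 2
                + 10 * C S ^ 3) * X ^ 3) *
        Ring.inverse ((1 + C S * X) * (1 + 6 * C L * X - 4 * C S * X) *
          (1 + 4 * C L * X - 2 * C S * X)) *
        (1 + C c₁ * X))
      = 4 * (3 * c₁ * L - 18 * L ^ 2 + 16 * L * S - 5 * S ^ 2) := by
  set A : R⟦X⟧ := 4 * (3 * C L * X
            + (12 * C L ^ 2 + C L * C S - 5 * C S ^ 2) * X ^ 2
            + (30 * C L ^ 2 * C S - 35 * C L * C S ^ 2
                + 10 * C S ^ 3) * X ^ 3) with hA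
  set u : R⟦X⟧ := (1 + C S * X) * (1 + 6 * C L * X - 4 * C S * X) *
      (1 + 4 * C L * X - 2 * C S * X) with hu
  set B : R⟦X⟧ := 1 + C c₁ * X with hB
  have hA' : A = C (12 * L) * X ^ 1 + C (48 * L ^ 2 + 4 * L * S - 20 * S ^ 2) * X ^ 2
      + C (120 * L ^ 2 * S - 140 * L * S ^ 2 + 40 * S ^ 3) * X ^ 3 := by
    rw [hA]
    simp only [map_add, map_sub, map_mul, map_pow, map_ofNat]
    ring
  have hu' : u = 1 + C (10 * L - 5 * S) * X ^ 1 + C (24 * L ^ 2 - 18 * L * S + 2 * S ^ 2) * X ^ 2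
      + C (24 * L ^ 2 * S - 28 * L * S ^ 2 + 8 * S ^ 3) * X ^ 3 := by
    rw [hu]
    simp only [map_add, map_sub, map_mul, map_pow, map_ofNat]
    ring
  have hB' : B = 1 + C c₁ * X ^ 1 := by rw [hB, pow_one]
  have hunit : IsUnit u := by
    rw [isUnit_iff_constantCoeff, hu]
    simp
  set V := Ring.inverse u with hV
  have hVu : V * u = 1 := Ring.inverse_mul_cancel u hunit
  have hu0 : coeff (R := R) 0 u = 1 := by
    rw [hu']
    simp only [LinearMap.map_add, coeff_one, coeff_X_pow, coeff_C_mul_X_pow]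
    norm_num
  have hu1 : coeff (R := R) 1 u = 10 * L - 5 * S := by
    rw [hu']
    simp only [LinearMap.map_add, coeff_one, coeff_X_pow, coeff_C_mul_X_pow]
    norm_num
  have hw0 : coeff (R := R) 0 (A * B) = 0 := by
    rw [hA', hB']
    simp only [coeff_mul, Finset.Nat.sum_antidiagonal_eq_sum_range_succ_mk,
      Finset.sum_range_succ, Finset.sum_range_zero, LinearMap.map_add, coeff_one, coeff_X_pow,
      coeff_C_mul_X_pow]
    norm_num
  have hw1 : coeff (R := R) 1 (A * B) = 12 * L := by
    rw [hA', hB']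
    simp only [coeff_mul, Finset.Nat.sum_antidiagonal_eq_sum_range_succ_mk,
      Finset.sum_range_succ, Finset.sum_range_zero, LinearMap.map_add, coeff_one, coeff_X_pow,
      coeff_C_mul_X_pow]
    norm_num
  have hw2 : coeff (R := R) 2 (A * B) =
      4 * (12 * L ^ 2 + L * S - 5 * S ^ 2) + 12 * L * c₁ := by
    rw [hA', hB']
    simp only [coeff_mul, Finset.Nat.sum_antidiagonal_eq_sum_range_succ_mk,
      Finset.sum_range_succ, Finset.sum_range_zero, LinearMap.map_add, coeff_one, coeff_X_pow,
      coeff_C_mul_X_pow]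
    norm_num; ring
  have e0 := congrArg (coeff (R := R) 0) hVu
  have e1 := congrArg (coeff (R := R) 1) hVu
  rw [coeff_mul, Finset.Nat.sum_antidiagonal_eq_sum_range_succ_mk] at e0 e1
  simp only [Finset.sum_range_succ, Finset.sum_range_zero, Nat.sub_zero, Nat.sub_self,
    coeff_one, hu0, hu1, zero_add, mul_one] at e0 e1
  norm_num at e0 e1
  rw [show A * V * B = A * B * V from by ring, coeff_mul,
    Finset.Nat.sum_antidiagonal_eq_sum_range_succ_mk]
  simp only [Finset.sum_range_succ, Finset.sum_range_zero, Nat.sub_zero, Nat.sub_self,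
    hw0, hw1, hw2, zero_add, zero_mul, mul_one]
  norm_num
  linear_combination (12 * L) * e1 + (4 * (3 * c₁ * L - 18 * L ^ 2 + 16 * L * S - 5 * S ^ 2)) * e0
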